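/- arXiv:2508.05000 — 7 statements merged into one kernel-verified Lean document; each statement's English description precedes it below -/
import Mathlib

section
/- For any rotation matrix R(θ) = [[cos θ, -sin θ],[sin θ, cos θ]] and any matrix P = [[a,b],[c,d]] in SL(2,ℝ), the trace of R(θ)·P·R(θ)·P⁻¹ equals 2 + (a² + b² + c² + d² - 2)·sin²θ. In particular, tr([R(θ), P]) ≥ 2. -/
open Matrix Real

/-- Rotation matrix R(θ). -/
noncomputable def Rot (θ : ℝ) : Matrix (Fin 2) (Fin 2) ℝ :=
  !![Real.cos θ, -Real.sin θ; Real.sin θ, Real.cos θ]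

lemma rot_inv (θ : ℝ) : (Rot θ)⁻¹ = !![Real.cos θ, Real.sin θ; -Real.sin θ, Real.cos θ] := by
  apply inv_eq_right_inv
  ext i j
  fin_cases i <;> fin_cases j <;>
    simp [Rot, Matrix.mul_fin_two, Matrix.one_fin_two] <;>
    nlinarith [Real.sin_sq_add_cos_sq θ]

lemma p_inv (a b c d : ℝ) (h : a * d - b * c = 1) :
    (!![a, b; c, d])⁻¹ = !![d, -b; -c, a] := by
  apply inv_eq_right_inv
  ext i j
  fin_cases i <;> fin_cases j <;>
    simp [Matrix.mul_fin_two, Matrix.one_fin_two] <;> nlinarith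

/-- For any rotation matrix `R(θ)` and any `P = !![a,b;c,d]` in `SL(2,ℝ)`, the trace of the
commutator `R(θ) P R(θ)⁻¹ P⁻¹` equals `2 + (a²+b²+c²+d²-2)·sin²θ`; in particular it is `≥ 2`. -/
theorem trace_comm_rot (θ a b c d : ℝ) (h : a * d - b * c = 1) :
    Matrix.trace (Rot θ * !![a, b; c, d] * (Rot θ)⁻¹ * (!![a, b; c, d])⁻¹)
      = 2 + (a ^ 2 + b ^ 2 + c ^ 2 + d ^ 2 - 2) * Real.sin θ ^ 2 ∧
    2 ≤ Matrix.trace (Rot θ * !![a, b; c, d] * (Rot θ)⁻¹ * (!![a, b; c, d])⁻¹) := by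
  have heq : Matrix.trace (Rot θ * !![a, b; c, d] * (Rot θ)⁻¹ * (!![a, b; c, d])⁻¹)
      = 2 + (a ^ 2 + b ^ 2 + c ^ 2 + d ^ 2 - 2) * Real.sin θ ^ 2 := by
    rw [rot_inv, p_inv a b c d h]
    simp [Rot, Matrix.mul_fin_two, Matrix.trace_fin_two]
    nlinarith [Real.sin_sq_add_cos_sq θ]
  refine ⟨heq, ?_⟩
  rw [heq]
  nlinarith [sq_nonneg (Real.sin θ), sq_nonneg (a - d), sq_nonneg (b + c),
    sq_nonneg ((a + d) * Real.sin θ), sq_nonneg ((b - c) * Real.sin θ)]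
end

section
/- For any λ with 0 < |λ| < 1 and any β ∈ SL(2,ℝ), the commutator [diag(λ,1/λ), β] is never equal to -I. (Equivalently: if tr([diag(λ,1/λ), β]) = -2 then [diag(λ,1/λ), β] ≠ -I.) -/
open Matrix

/-- For `0 < |l| < 1` and any `β ∈ SL(2,ℝ)`, the commutator `[diag(l,1/l), β]` is never `-I`. -/
theorem comm_diag_ne_neg_one (l : ℝ) (hl0 : 0 < |l|) (hl1 : |l| < 1)
    (β : Matrix (Fin 2) (Fin 2) ℝ) (hβ : β.det = 1) :
    !![l, 0; 0, l⁻¹] * β * (!![l, 0; 0, l⁻¹])⁻¹ * β⁻¹ ≠ -(1 : Matrix (Fin 2) (Fin 2) ℝ) := by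
  have hl : l ≠ 0 := by
    intro h; simp [h] at hl0
  intro h
  have hβu : IsUnit β.det := by simp [hβ]
  have h1 : !![l, 0; 0, l⁻¹] * β * (!![l, 0; 0, l⁻¹])⁻¹ = -β := by
    have := congrArg (· * β) h
    simpa [Matrix.mul_assoc, Matrix.nonsing_inv_mul β hβu] using this
  have hA : (!![l, 0; 0, l⁻¹])⁻¹ = !![l⁻¹, 0; 0, l] := by
    apply Matrix.inv_eq_right_inv
    ext i j
    fin_cases i <;> fin_cases j <;>
      simp [Matrix.mul_apply, Fin.sum_univ_two, mul_inv_cancel₀ hl, inv_mul_cancel₀ hl]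
  rw [hA] at h1
  have h2 : !![l, 0; 0, l⁻¹] * β = -β * !![l, 0; 0, l⁻¹] := by
    have := congrArg (· * !![l, 0; 0, l⁻¹]) h1
    rw [Matrix.mul_assoc, Matrix.mul_assoc] at this
    have hAA : !![l⁻¹, 0; 0, l] * !![l, 0; 0, l⁻¹] = 1 := by
      ext i j
      fin_cases i <;> fin_cases j <;>
        simp [Matrix.mul_apply, Fin.sum_univ_two, mul_inv_cancel₀ hl, inv_mul_cancel₀ hl]
    rw [hAA, Matrix.mul_one] at this
    exact this
  have h00 := congrFun (congrFun h2 0) 0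
  have h01 := congrFun (congrFun h2 0) 1
  have h10 := congrFun (congrFun h2 1) 0
  have h11 := congrFun (congrFun h2 1) 1
  simp [Matrix.mul_apply, Fin.sum_univ_two] at h00 h01 h10 h11
  have hinv : l * l⁻¹ = 1 := mul_inv_cancel₀ hl
  have hpos : (0:ℝ) < 1 + l ^ 2 := by positivity
  have hb00 : β 0 0 = 0 := by
    have h' : 2 * l * β 0 0 = 0 := by linear_combination h00
    rcases mul_eq_zero.mp h' with h' | h'
    · exact absurd (by linarith : l = 0) hl
    · exact h'
  have hb11 : β 1 1 = 0 := by
    have h' : 2 * l⁻¹ * β 1 1 = 0 := by linear_combination h11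
    rcases mul_eq_zero.mp h' with h' | h'
    · exact absurd (by linarith : l⁻¹ = 0) (inv_ne_zero hl)
    · exact h'
  have hb01 : β 0 1 = 0 := by
    have h' : (1 + l ^ 2) * β 0 1 = 0 := by
      linear_combination l * h01 + (- β 0 1) * hinv
    rcases mul_eq_zero.mp h' with h' | h'
    · exact absurd h' (ne_of_gt hpos)
    · exact h'
  have hb10 : β 1 0 = 0 := by
    have h' : (1 + l ^ 2) * β 1 0 = 0 := by
      linear_combination l * h10 + (- β 1 0) * hinv
    rcases mul_eq_zero.mp h' with h' | h'
    · exact absurd h' (ne_of_gt hpos)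
    · exact h'
  rw [Matrix.det_fin_two, hb00, hb01, hb10, hb11] at hβ
  norm_num at hβ
end

section
/- Let θ₁, θ₂ ∈ (0, 2π) with rotation matrices R(θ₁), R(θ₂), and let C₂ = P·R(θ₂)·P⁻¹ for P ∈ SL(2,ℝ). If tr(R(θ₁)·C₂) > 2, then sin θ₁ · sin θ₂ < 0. -/
open Matrix Real

/-- If `θ₁, θ₂ ∈ (0, 2π)`, `C₂ = P R(θ₂) P⁻¹` with `P ∈ SL(2,ℝ)` and `tr(R(θ₁) C₂) > 2`,
then `sin θ₁ · sin θ₂ < 0`. -/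
theorem sin_mul_sin_neg_of_trace_gt (θ₁ θ₂ : ℝ)
    (h₁ : 0 < θ₁ ∧ θ₁ < 2 * Real.pi) (h₂ : 0 < θ₂ ∧ θ₂ < 2 * Real.pi)
    (P : Matrix (Fin 2) (Fin 2) ℝ) (hP : P.det = 1)
    (htr : 2 < Matrix.trace (Rot θ₁ * (P * Rot θ₂ * P⁻¹))) :
    Real.sin θ₁ * Real.sin θ₂ < 0 := by
  set a := P 0 0 with ha
  set b := P 0 1 with hb
  set c := P 1 0 with hc
  set d := P 1 1 with hd
  have hPeta : P = !![a, b; c, d] := by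
    rw [ha, hb, hc, hd]; exact Matrix.etaExpand_eq P |>.symm
  have hdet : a * d - b * c = 1 := by
    have := hP; rw [Matrix.det_fin_two] at this; linarith
  have hinv : P⁻¹ = !![d, -b; -c, a] := by
    rw [Matrix.inv_def, hP, Matrix.adjugate_fin_two P, ← ha, ← hb, ← hc, ← hd]
    simp
  rw [hPeta] at hinv
  rw [hPeta, hinv] at htr
  simp only [Rot, Matrix.mul_fin_two, Matrix.trace_fin_two_of] at htr
  have hc1 : Real.cos θ₁ ^ 2 + Real.sin θ₁ ^ 2 = 1 := by
    rw [add_comm]; exact Real.sin_sq_add_cos_sq θ₁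
  have hc2 : Real.cos θ₂ ^ 2 + Real.sin θ₂ ^ 2 = 1 := by
    rw [add_comm]; exact Real.sin_sq_add_cos_sq θ₂
  nlinarith [sq_nonneg (a - d), sq_nonneg (b + c), sq_nonneg (a + d), sq_nonneg (b - c),
    sq_nonneg (Real.cos θ₁ - Real.cos θ₂), sq_nonneg (Real.cos θ₁ + Real.cos θ₂),
    sq_nonneg (Real.sin θ₁ * Real.sin θ₂), sq_nonneg (a*a + b*b + c*c + d*d - 2)]
end

section
/- Let C₂ = diag(λ, 1/λ) with λ real, |λ| > 1 or 0 < |λ| < 1, and let C₀ = P·R(θ)·P⁻¹ where P = [[a,b],[c,d]] ∈ SL(2,ℝ). Then tr(C₂C₀) = R·cos(θ - α) for R = √((λ + λ⁻¹)² + (λ - λ⁻¹)²(ac + bd)²) and some angle α; in particular R ≥ |λ + λ⁻¹| > 2. -/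
open Matrix Real

/-- For `C₂ = diag(l, 1/l)` hyperbolic (`l ≠ 0`, `|l| ≠ 1`) and `C₀ = P R(θ) P⁻¹` with
`P = !![a,b;c,d] ∈ SL(2,ℝ)`, there exists `α` with
`tr(C₂C₀) = R cos(θ - α)` where `R = √((l+l⁻¹)² + (l-l⁻¹)²(ac+bd)²)`; moreover
`R ≥ |l + l⁻¹| > 2`. -/
theorem trace_diag_conj_rot_phase (l θ a b c d : ℝ)
    (hl0 : l ≠ 0) (hl1 : |l| ≠ 1) (h : a * d - b * c = 1) :
    (∃ α : ℝ,
      Matrix.trace (!![l, 0; 0, l⁻¹] * (!![a, b; c, d] * Rot θ * (!![a, b; c, d])⁻¹))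
        = Real.sqrt ((l + l⁻¹) ^ 2 + (l - l⁻¹) ^ 2 * (a * c + b * d) ^ 2)
            * Real.cos (θ - α)) ∧
    |l + l⁻¹| ≤ Real.sqrt ((l + l⁻¹) ^ 2 + (l - l⁻¹) ^ 2 * (a * c + b * d) ^ 2) ∧
    2 < |l + l⁻¹| := by
  set A : ℝ := l + l⁻¹ with hA
  set B : ℝ := (l - l⁻¹) * (a * c + b * d) with hB
  -- trace computation
  have htr : Matrix.trace (!![l, 0; 0, l⁻¹] * (!![a, b; c, d] * Rot θ * (!![a, b; c, d])⁻¹))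
      = A * Real.cos θ + B * Real.sin θ := by
    have hinv : (!![a, b; c, d])⁻¹ = !![d, -b; -c, a] := by
      rw [Matrix.inv_def, Matrix.adjugate_fin_two, Matrix.det_fin_two_of]
      rw [show a * d - b * c = 1 from h]
      simp
    rw [hinv, Rot]
    simp [Matrix.mul_fin_two, Matrix.trace_fin_two_of, hA, hB]
    linear_combination (l + l⁻¹) * Real.cos θ * h
  -- |A| > 2
  have hlpos : (0:ℝ) < |l| := abs_pos.2 hl0
  have hkey : |A| * |l| = l ^ 2 + 1 := by
    rw [← abs_mul]
    have : A * l = l ^ 2 + 1 := by rw [hA, add_mul, inv_mul_cancel₀ hl0]; ring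
    rw [this, abs_of_pos (by positivity)]
  have hsq : (0:ℝ) < (|l| - 1) ^ 2 := by
    have h2 : |l| - 1 ≠ 0 := sub_ne_zero.2 hl1
    exact lt_of_le_of_ne (sq_nonneg _) (Ne.symm (pow_ne_zero 2 h2))
  have hA2 : 2 < |A| := by nlinarith [sq_abs l]
  have hAne : A ≠ 0 := by
    intro hz; rw [hz, abs_zero] at hA2; linarith
  -- R and the phase
  have hRle : |A| ≤ Real.sqrt (A ^ 2 + (l - l⁻¹) ^ 2 * (a * c + b * d) ^ 2) := by
    rw [← Real.sqrt_sq_eq_abs]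
    apply Real.sqrt_le_sqrt
    nlinarith [sq_nonneg ((l - l⁻¹) * (a * c + b * d))]
  refine ⟨⟨Complex.arg ⟨A, B⟩, ?_⟩, hRle, hA2⟩
  set z : ℂ := ⟨A, B⟩ with hzdef
  have hzre : z.re = A := rfl
  have hzim : z.im = B := rfl
  have hz : z ≠ 0 := by
    intro hz0
    apply hAne
    rw [← hzre, hz0]; rfl
  have habs : ‖z‖ = Real.sqrt (A ^ 2 + (l - l⁻¹) ^ 2 * (a * c + b * d) ^ 2) := by
    rw [Complex.norm_def, Complex.normSq_apply, hzre, hzim]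
    congr 1
    rw [hB]; ring
  have habspos : 0 < ‖z‖ := by
    rw [habs]; linarith
  have hcos : Real.cos (Complex.arg z) = A / ‖z‖ := by
    rw [Complex.cos_arg hz, hzre]
  have hsin : Real.sin (Complex.arg z) = B / ‖z‖ := by
    rw [Complex.sin_arg, hzim]
  rw [htr, ← habs, Real.cos_sub, hcos, hsin]
  field_simp
end

section
/- Let C₁, C₂ ∈ SL(2,ℝ) be parabolic elements with C₁ = Φ(a₁) and C₂ = P·Φ(a₂)·P⁻¹, P ∈ SL(2,ℝ) with (2,1)-entry c. The product C₁C₂ is parabolic or ±I (i.e., |tr(C₁C₂)| = 2) if and only if c = 0, or c = ±2 and (Im(a₁)-Re(a₁))·(Im(a₂)-Re(a₂)) = 1. -/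
open Matrix Complex

noncomputable def PhiMat (a : ℂ) : Matrix (Fin 2) (Fin 2) ℝ :=
  ((-1 : ℝ) ^ (⌊a.re⌋ + 1)) • !![1, a.im - a.re; 0, 1]

lemma phi_one : PhiMat 1 = !![1, -1; 0, 1] := by
  ext i j; fin_cases i <;> fin_cases j <;> simp [PhiMat] <;> norm_num

lemma phi_neg_one : PhiMat (-1) = !![1, 1; 0, 1] := by
  ext i j; fin_cases i <;> fin_cases j <;> simp [PhiMat] <;> norm_num

lemma phi_I : PhiMat Complex.I = !![-1, -1; 0, -1] := by
  ext i j; fin_cases i <;> fin_cases j <;> simp [PhiMat]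

lemma phi_neg_I : PhiMat (-Complex.I) = !![-1, 1; 0, -1] := by
  ext i j; fin_cases i <;> fin_cases j <;> simp [PhiMat]

set_option maxHeartbeats 4000000 in
/-- Let `C₁ = Φ(a₁)` and `C₂ = P Φ(a₂) P⁻¹` with `P = !![a,b;c,d] ∈ SL(2,ℝ)`. Then
`|tr(C₁C₂)| = 2` if and only if `c = 0`, or `c = ±2` and
`(Im a₁ - Re a₁)(Im a₂ - Re a₂) = 1`. -/
theorem abs_trace_eq_two_iff (a₁ a₂ : ℂ)
    (h₁ : a₁ = 1 ∨ a₁ = -1 ∨ a₁ = Complex.I ∨ a₁ = -Complex.I)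
    (h₂ : a₂ = 1 ∨ a₂ = -1 ∨ a₂ = Complex.I ∨ a₂ = -Complex.I)
    (a b c d : ℝ) (h : a * d - b * c = 1) :
    |Matrix.trace (PhiMat a₁ * (!![a, b; c, d] * PhiMat a₂ * (!![a, b; c, d])⁻¹))| = 2
      ↔ c = 0 ∨ ((c = 2 ∨ c = -2) ∧ (a₁.im - a₁.re) * (a₂.im - a₂.re) = 1) := by
  have hinv : (!![a, b; c, d])⁻¹ = !![d, -b; -c, a] := by
    apply Matrix.inv_eq_right_inv
    ext i j
    fin_cases i <;> fin_cases j <;>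
      simp [Matrix.mul_apply, Fin.sum_univ_succ, Matrix.one_apply] <;> nlinarith
  rw [hinv]
  rcases h₁ with rfl | rfl | rfl | rfl <;> rcases h₂ with rfl | rfl | rfl | rfl <;>
    · simp only [phi_one, phi_neg_one, phi_I, phi_neg_I]
      norm_num [Matrix.trace_fin_two, Matrix.mul_apply, Fin.sum_univ_succ]
      ring_nf
      rw [abs_eq (by norm_num : (0:ℝ) ≤ 2)]
      constructor
      · rintro (h' | h') <;>
          first
          | (have hcc : c ^ 2 = 0 := by nlinarith
             exact Or.inl (by simpa [pow_eq_zero_iff] using hcc))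
          | (have hcc : c ^ 2 = 0 := by nlinarith
             simpa [pow_eq_zero_iff] using hcc)
          | (have h4 : (c - 2) * (c + 2) = 0 := by nlinarith
             rcases mul_eq_zero.mp h4 with h5 | h5
             · exact Or.inr (Or.inl (by linarith))
             · exact Or.inr (Or.inr (by linarith)))
      · intro h'
        have hc : c = 0 ∨ c = 2 ∨ c = -2 := by tauto
        rcases hc with rfl | rfl | rfl <;>
          first
          | (left; nlinarith)
          | (right; nlinarith)
          | (norm_num at h' <;> tauto)
end

section
/- Let C₁ = Φ(a₁) with s₁ = Im(a₁) - Re(a₁), and C₂ = P·Φ(a₂)·P⁻¹ with s₂ = Im(a₂) - Re(a₂) and P ∈ SL(2,ℝ) having (2,1)-entry c ≥ 0. If s₁·s₂ = 1 and Re(a₁) + Re(a₂) is even, then tr(C₁C₂) = 2 - c², so C₁C₂ is hyperbolic with negative trace if and only if c > 2, and parabolic with trace -2 if and only if c = 2. -/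
open Matrix Complex

lemma trace_key (s₁ s₂ : ℝ) (e₁ e₂ : ℤ) (a b c d : ℝ) (h : a * d - b * c = 1)
    (he : Even (e₁ + e₂)) :
    Matrix.trace ((((-1:ℝ)^(e₁+1)) • !![1, s₁; 0, 1]) *
      (!![a, b; c, d] * (((-1:ℝ)^(e₂+1)) • !![1, s₂; 0, 1]) * (!![a, b; c, d])⁻¹))
      = 2 - s₁ * s₂ * c ^ 2 := by
  have hinv : (!![a, b; c, d])⁻¹ = !![d, -b; -c, a] := by
    rw [Matrix.inv_def, Matrix.det_fin_two_of, Matrix.adjugate_fin_two_of, h]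
    simp
  have hee : ((-1:ℝ))^(e₁+1) * ((-1:ℝ))^(e₂+1) = 1 := by
    rw [← zpow_add₀ (by norm_num : (-1:ℝ) ≠ 0)]
    obtain ⟨k, hk⟩ := he
    have : e₁ + 1 + (e₂ + 1) = 2 * (k + 1) := by omega
    rw [this, _root_.zpow_mul]; norm_num
  rw [hinv]
  simp only [Matrix.smul_mul, Matrix.mul_smul, smul_smul, Matrix.trace_smul]
  rw [mul_comm ((-1:ℝ)^(e₂+1)), hee]
  simp [Matrix.mul_fin_two, Matrix.trace_fin_two_of]
  ring_nf
  nlinarith [sq_nonneg c]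

/-- Let `C₁ = Φ(a₁)` with `s₁ = Im a₁ - Re a₁` and `C₂ = P Φ(a₂) P⁻¹` with
`s₂ = Im a₂ - Re a₂`, `P = !![a,b;c,d] ∈ SL(2,ℝ)` having `(2,1)`-entry `c ≥ 0`.
If `s₁ s₂ = 1` and `Re a₁ + Re a₂` is even, then `tr(C₁C₂) = 2 - c²`; hence
`tr(C₁C₂) < -2 ↔ c > 2` and `tr(C₁C₂) = -2 ↔ c = 2`. -/
theorem trace_parab_product_even_case (a₁ a₂ : ℂ)
    (h₁ : a₁ = 1 ∨ a₁ = -1 ∨ a₁ = Complex.I ∨ a₁ = -Complex.I)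
    (h₂ : a₂ = 1 ∨ a₂ = -1 ∨ a₂ = Complex.I ∨ a₂ = -Complex.I)
    (a b c d : ℝ) (h : a * d - b * c = 1) (hcpos : 0 ≤ c)
    (hs : (a₁.im - a₁.re) * (a₂.im - a₂.re) = 1)
    (heven : Even (⌊a₁.re⌋ + ⌊a₂.re⌋)) :
    Matrix.trace (PhiMat a₁ * (!![a, b; c, d] * PhiMat a₂ * (!![a, b; c, d])⁻¹))
      = 2 - c ^ 2 ∧
    (Matrix.trace (PhiMat a₁ * (!![a, b; c, d] * PhiMat a₂ * (!![a, b; c, d])⁻¹)) < -2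
      ↔ 2 < c) ∧
    (Matrix.trace (PhiMat a₁ * (!![a, b; c, d] * PhiMat a₂ * (!![a, b; c, d])⁻¹)) = -2
      ↔ c = 2) := by
  have key := trace_key (a₁.im - a₁.re) (a₂.im - a₂.re) ⌊a₁.re⌋ ⌊a₂.re⌋ a b c d h heven
  rw [hs, one_mul] at key
  have htr : Matrix.trace (PhiMat a₁ * (!![a, b; c, d] * PhiMat a₂ * (!![a, b; c, d])⁻¹))
      = 2 - c ^ 2 := by rw [PhiMat, PhiMat]; exact key
  refine ⟨htr, ?_, ?_⟩
  · rw [htr]; constructor <;> intro hh <;> nlinarith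
  · rw [htr]; constructor <;> intro hh <;> nlinarith
end

section
/- Suppose X = [[x₁,x₂],[x₃,x₄]] and Y ∈ SL(2,ℝ), with X = diag(λ,1/λ) hyperbolic (λ real, 0<|λ|<1) and Y = [[a,b],[c,d]], and suppose the commutator [X,Y] is conjugate to -[[1,1],[0,1]] (i.e. [X,Y] has trace -2 and its conjugacy data gives σ = i). Then bc = 4/(λ - λ⁻¹)² > 0, a ≠ 0, ad = bc + 1 > 0, and (λ²-1)·a·b > 0 forces ac < 0. -/
open Matrix

/-- Let `X = diag(l, 1/l)` with `0 < |l| < 1` and `Y = !![a,b;c,d] ∈ SL(2,ℝ)`. If the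
commutator `[X,Y]` has trace `-2` and its `(1,2)`-entry `(l²-1)ab` is positive, then
`bc = 4/(l-l⁻¹)² > 0`, `a ≠ 0`, `ad = bc + 1 > 0`, and `ac < 0`. -/
theorem comm_neg_parabolic_entries (l a b c d : ℝ)
    (hl0 : 0 < |l|) (hl1 : |l| < 1) (h : a * d - b * c = 1)
    (htr : Matrix.trace
        (!![l, 0; 0, l⁻¹] * !![a, b; c, d] * (!![l, 0; 0, l⁻¹])⁻¹ * (!![a, b; c, d])⁻¹)
      = -2)
    (hab : 0 < (l ^ 2 - 1) * a * b) :
    b * c = 4 / (l - l⁻¹) ^ 2 ∧ 0 < b * c ∧ a ≠ 0 ∧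
    a * d = b * c + 1 ∧ 0 < a * d ∧ a * c < 0 := by
  have hl : l ≠ 0 := fun h0 => by simp [h0] at hl0
  have hl2 : l ^ 2 < 1 := by
    have := abs_lt.mp hl1
    nlinarith [sq_abs l]
  have hl2' : l ^ 2 - 1 < 0 := by linarith
  simp only [Matrix.inv_def, Matrix.adjugate_fin_two_of, Matrix.det_fin_two_of,
    h, mul_inv_cancel₀ hl, mul_zero, zero_mul, sub_zero, Ring.inverse_one, one_smul,
    Matrix.trace_fin_two, Matrix.mul_apply, Fin.sum_univ_two, Matrix.of_apply,
    Matrix.cons_val', Matrix.cons_val_zero, Matrix.cons_val_one, Matrix.head_cons,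
    Matrix.head_fin_const, Matrix.empty_val', Matrix.cons_val_fin_one, neg_zero,
    add_zero, zero_add] at htr
  -- now htr should be scalar equation
  have key : b * c * (l - l⁻¹) ^ 2 = 4 := by
    field_simp at htr ⊢
    nlinarith [htr, mul_inv_cancel₀ hl]
  have hsq : 0 < (l - l⁻¹) ^ 2 := by
    have : l - l⁻¹ ≠ 0 := by
      intro h0
      have : l * l = 1 := by
        have := mul_inv_cancel₀ hl
        nlinarith [sub_eq_zero.mp h0]
      nlinarith
    positivity
  have hbc : b * c = 4 / (l - l⁻¹) ^ 2 := by
    rw [eq_div_iff hsq.ne']; exact key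
  have hbc0 : 0 < b * c := by rw [hbc]; positivity
  have had : a * d = b * c + 1 := by linarith
  have had0 : 0 < a * d := by linarith
  have ha : a ≠ 0 := fun h0 => by simp [h0] at had0
  have hab' : a * b < 0 := by nlinarith
  refine ⟨hbc, hbc0, ha, had, had0, ?_⟩
  nlinarith [sq_nonneg b, mul_pos hbc0 hbc0]
end
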